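/- Let A be a commutative ring and ϖ ∈ A a non-zero-divisor and non-unit. For every n ≥ 0, (ϖ^n)A equals the intersection, over all weakly associated prime ideals 𝔭 of the ideal (ϖ), of the preimages under A[ϖ⁻¹] → A_𝔭[ϖ⁻¹] of ϖ^n A_𝔭. In particular, an element f ∈ A lies in (ϖ^n)A if and only if its image in A_𝔭 lies in ϖ^n A_𝔭 for every weakly associated prime 𝔭 of (ϖ). -/

import Mathlib

/-- `𝔭` is a weakly associated prime of the principal ideal `(ϖ)`:
`𝔭` is minimal over `(ϖ) :_A f` for some `f ∈ A`. -/
def IsWeaklyAssociatedPrimeOf {A : Type*} [CommRing A] (ϖ : A) (𝔭 : Ideal A) : Prop :=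
  ∃ f : A, 𝔭 ∈ ((Ideal.span {ϖ}).colon (Ideal.span {f})).minimalPrimes

private lemma map_algebraMap_aux {A : Type*} [CommRing A] (ϖ : A) (𝔭 : Ideal A) [𝔭.IsPrime]
    (y : A) :
    (IsLocalization.Away.map (Localization.Away ϖ)
        (Localization.Away (algebraMap A (Localization.AtPrime 𝔭) ϖ))
        (algebraMap A (Localization.AtPrime 𝔭)) ϖ) (algebraMap A (Localization.Away ϖ) y) =
    algebraMap A (Localization.Away (algebraMap A (Localization.AtPrime 𝔭) ϖ)) y := by
  rw [IsLocalization.Away.map, IsLocalization.map_eq,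
    ← IsScalarTower.algebraMap_apply A (Localization.AtPrime 𝔭)]

/-- For a non-zero-divisor non-unit `ϖ` in a commutative ring `A` and every `n ≥ 0`:
an element `x` of `A[ϖ⁻¹]` lies in `ϖ^n·A` if and only if, for every weakly associated
prime `𝔭` of `(ϖ)`, the image of `x` in `A_𝔭[ϖ⁻¹]` lies in `ϖ^n·A_𝔭`.  (In particular,
`f ∈ A` lies in `(ϖ^n)` iff its image in `A_𝔭` lies in `ϖ^n A_𝔭` for all such `𝔭`.) -/
theorem pow_span_eq_iInter_weaklyAssociated {A : Type*} [CommRing A] (ϖ : A)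
    (hϖ : ϖ ∈ nonZeroDivisors A) (hnu : ¬IsUnit ϖ) (n : ℕ)
    (x : Localization.Away ϖ) :
    (∃ a : A, x = algebraMap A (Localization.Away ϖ) ϖ ^ n *
        algebraMap A (Localization.Away ϖ) a) ↔
      ∀ (𝔭 : Ideal A) [𝔭.IsPrime], IsWeaklyAssociatedPrimeOf ϖ 𝔭 →
        ∃ a : Localization.AtPrime 𝔭,
          (IsLocalization.Away.map (Localization.Away ϖ)
              (Localization.Away (algebraMap A (Localization.AtPrime 𝔭) ϖ))
              (algebraMap A (Localization.AtPrime 𝔭)) ϖ) x =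
            algebraMap A (Localization.Away (algebraMap A (Localization.AtPrime 𝔭) ϖ)) ϖ ^ n *
              algebraMap (Localization.AtPrime 𝔭)
                (Localization.Away (algebraMap A (Localization.AtPrime 𝔭) ϖ)) a := by
  constructor
  · rintro ⟨a, rfl⟩ 𝔭 _ _
    refine ⟨algebraMap A _ a, ?_⟩
    rw [map_mul, map_pow, map_algebraMap_aux, map_algebraMap_aux,
      ← IsScalarTower.algebraMap_apply A (Localization.AtPrime 𝔭)]
  · intro H
    obtain ⟨⟨a, s, m, rfl⟩, hx⟩ := IsLocalization.surj (Submonoid.powers ϖ) x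
    simp only at hx
    -- hx : x * algebraMap A _ (ϖ ^ m) = algebraMap A _ a
    have key : ∀ j ≤ m + n, ∃ b, a = ϖ ^ j * b := by
      intro j
      induction j with
      | zero => exact fun _ => ⟨a, by simp⟩
      | succ j ih =>
        intro hj
        obtain ⟨b, hab⟩ := ih (Nat.le_of_succ_le hj)
        rw [hab] at hx
        suffices hb : b ∈ Ideal.span {ϖ} by
          obtain ⟨c, rfl⟩ := Ideal.mem_span_singleton'.mp hb
          exact ⟨c, by rw [hab]; ring⟩
        by_contra hb
        have hI : (Ideal.span {ϖ}).colon (Ideal.span {b}) ≠ ⊤ := by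
          intro h
          refine hb ?_
          have : (1 : A) ∈ (Ideal.span {ϖ}).colon (Ideal.span {b}) := h ▸ Submodule.mem_top
          rwa [Ideal.mem_colon_span_singleton, one_mul] at this
        obtain ⟨M, hM, hIM⟩ := Ideal.exists_le_maximal _ hI
        obtain ⟨𝔭, h𝔭, -⟩ := Ideal.exists_minimalPrimes_le hIM
        have h𝔭p : 𝔭.IsPrime := h𝔭.1.1
        obtain ⟨a', ha'⟩ := H 𝔭 ⟨b, h𝔭⟩
        -- abbreviations only in comments: B = Localization.AtPrime 𝔭, Q = Away (g ϖ)
        have hx0 := congrArg (IsLocalization.Away.map (Localization.Away ϖ)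
          (Localization.Away (algebraMap A (Localization.AtPrime 𝔭) ϖ))
          (algebraMap A (Localization.AtPrime 𝔭)) ϖ) hx
        rw [map_mul, map_algebraMap_aux, map_algebraMap_aux, ha', map_pow, map_mul, map_pow]
          at hx0
        have hunit : IsUnit (algebraMap A
            (Localization.Away (algebraMap A (Localization.AtPrime 𝔭) ϖ)) ϖ) := by
          rw [IsScalarTower.algebraMap_apply A (Localization.AtPrime 𝔭)
            (Localization.Away (algebraMap A (Localization.AtPrime 𝔭) ϖ))]
          exact IsLocalization.Away.algebraMap_isUnit (algebraMap A (Localization.AtPrime 𝔭) ϖ)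
        obtain ⟨k, hk⟩ : ∃ k, m + n = j + 1 + k := ⟨m + n - (j + 1), (Nat.add_sub_cancel' hj).symm⟩
        have hQ : algebraMap (Localization.AtPrime 𝔭) _
              (algebraMap A (Localization.AtPrime 𝔭) b) =
            algebraMap (Localization.AtPrime 𝔭)
              (Localization.Away (algebraMap A (Localization.AtPrime 𝔭) ϖ))
              (algebraMap A (Localization.AtPrime 𝔭) ϖ *
                (algebraMap A (Localization.AtPrime 𝔭) ϖ ^ k * a')) := by
          refine (hunit.pow j).mul_left_cancel ?_
          rw [map_mul, map_mul, map_pow,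
            ← IsScalarTower.algebraMap_apply A (Localization.AtPrime 𝔭),
            ← IsScalarTower.algebraMap_apply A (Localization.AtPrime 𝔭)]
          calc algebraMap A _ ϖ ^ j * algebraMap A _ b
              = algebraMap A _ ϖ ^ n * algebraMap (Localization.AtPrime 𝔭) _ a' *
                algebraMap A _ ϖ ^ m := by
                rw [← hx0]
            _ = algebraMap A _ ϖ ^ (m + n) * algebraMap (Localization.AtPrime 𝔭) _ a' := by ring
            _ = algebraMap A _ ϖ ^ (j + 1 + k) * algebraMap (Localization.AtPrime 𝔭) _ a' := by
                rw [hk]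
            _ = _ := by ring
        rw [IsLocalization.eq_iff_exists
          (Submonoid.powers (algebraMap A (Localization.AtPrime 𝔭) ϖ))] at hQ
        obtain ⟨c, he⟩ := hQ
        obtain ⟨e, hce⟩ := c.2
        rw [← hce] at he
        -- he : gϖ^e * g b = gϖ^e * (gϖ * (gϖ^k * a'))
        obtain ⟨⟨d, t⟩, hdt⟩ := IsLocalization.surj 𝔭.primeCompl
          (algebraMap A (Localization.AtPrime 𝔭) ϖ ^ k * a')
        simp only at hdt
        have hB : algebraMap A (Localization.AtPrime 𝔭) (ϖ ^ e * b * t) =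
            algebraMap A (Localization.AtPrime 𝔭) (ϖ ^ (e + 1) * d) := by
          simp only [map_mul, map_pow]
          linear_combination (algebraMap A (Localization.AtPrime 𝔭) (t : A)) * he +
            (algebraMap A (Localization.AtPrime 𝔭) ϖ) ^ (e + 1) * hdt
        rw [IsLocalization.eq_iff_exists 𝔭.primeCompl] at hB
        obtain ⟨u, hu⟩ := hB
        have hcancel : (u : A) * t * b = ϖ * ((u : A) * d) := by
          have hz : ((u : A) * t * b - ϖ * ((u : A) * d)) * ϖ ^ e = 0 := by
            linear_combination hu
          exact sub_eq_zero.mp ((pow_mem hϖ e).2 _ hz)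
        have hmem : (u : A) * t ∈ (Ideal.span {ϖ}).colon (Ideal.span {b}) := by
          rw [Ideal.mem_colon_span_singleton, hcancel]
          exact Ideal.mem_span_singleton'.mpr ⟨(u : A) * d, by ring⟩
        have : (u : A) * t ∈ 𝔭 := h𝔭.1.2 hmem
        rcases h𝔭p.mem_or_mem this with h | h
        · exact u.2 h
        · exact t.2 h
    obtain ⟨b, hab⟩ := key (m + n) le_rfl
    rw [hab] at hx
    have hu : IsUnit (algebraMap A (Localization.Away ϖ) ϖ ^ m) :=
      (IsLocalization.Away.algebraMap_isUnit ϖ).pow m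
    refine ⟨b, hu.mul_left_cancel ?_⟩
    rw [mul_comm _ x, ← map_pow, hx, ← map_pow, ← map_mul, ← map_mul]
    exact congrArg _ (by ring)
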